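/- Let $X$ be a $p \times n$ real matrix with $X = A Z$ for a deterministic $p \times p$ matrix $A$ and a $p \times n$ random matrix $Z$ with independent entries, each with mean $0$ and variance $1$. Let $\Sigma = A A^{T}$. Let $k \ge 1$ and let $\sigma_1, \ldots, \sigma_k \in \{1,\ldots,n\}$ be pairwise distinct indices. Then $\mathbb{E}\big[\prod_{i=1}^k (X^{T}X)_{\sigma_i, \sigma_{i+1}}\big] = \mathrm{tr}(\Sigma^k)$, where $\sigma_{k+1} := \sigma_1$. -/

import Mathlib

open MeasureTheory ProbabilityTheory Matrix

lemma KV.prod_shift {k : ℕ} [NeZero k] {M : Type*} [CommMonoid M] (f : Fin k → M) :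
    ∏ i : Fin k, f (i + 1) = ∏ i : Fin k, f i :=
  Fintype.prod_equiv (Equiv.addRight (1 : Fin k)) _ _ (fun _ => rfl)

lemma KV.pow_succ_apply {p : ℕ} (M : Matrix (Fin p) (Fin p) ℝ) :
    ∀ (m : ℕ) (i j : Fin p), (M ^ (m+1)) i j
      = ∑ x : Fin m → Fin p, ∏ t : Fin (m+1),
          M ((Fin.cons i x : Fin (m+1) → Fin p) t) ((Fin.snoc x j : Fin (m+1) → Fin p) t) := by
  intro m
  induction m with
  | zero =>
      intro i j
      simp [pow_one, Fin.snoc]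
  | succ m ih =>
      intro i j
      rw [pow_succ' M (m+1), Matrix.mul_apply]
      have key : ∀ (a : Fin p) (x : Fin m → Fin p),
          (∏ t : Fin (m+2), M ((Fin.cons i (Fin.cons a x) : Fin (m+2) → Fin p) t)
              ((Fin.snoc (Fin.cons a x) j : Fin (m+2) → Fin p) t))
          = M i a * ∏ t : Fin (m+1),
              M ((Fin.cons a x : Fin (m+1) → Fin p) t) ((Fin.snoc x j : Fin (m+1) → Fin p) t) := by
        intro a x
        rw [← Fin.cons_snoc_eq_snoc_cons, Fin.prod_univ_succ]
        simp [Fin.cons_succ, Fin.cons_zero]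
      calc ∑ a, M i a * (M ^ (m+1)) a j
          = ∑ a : Fin p, ∑ x : Fin m → Fin p,
              M i a * ∏ t : Fin (m+1),
                M ((Fin.cons a x : Fin (m+1) → Fin p) t) ((Fin.snoc x j : Fin (m+1) → Fin p) t) := by
            simp_rw [ih, Finset.mul_sum]
        _ = ∑ ax : Fin p × (Fin m → Fin p),
              M i ax.1 * ∏ t : Fin (m+1),
                M ((Fin.cons ax.1 ax.2 : Fin (m+1) → Fin p) t)
                  ((Fin.snoc ax.2 j : Fin (m+1) → Fin p) t) := by
            rw [Fintype.sum_prod_type]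
        _ = ∑ x : Fin (m+1) → Fin p, ∏ t : Fin (m+2),
              M ((Fin.cons i x : Fin (m+2) → Fin p) t) ((Fin.snoc x j : Fin (m+2) → Fin p) t) := by
            refine Fintype.sum_equiv (Fin.consEquiv (fun _ => Fin p)) _ _ ?_
            intro ax
            rw [← key ax.1 ax.2]
            rfl

lemma KV.trace_pow {p k : ℕ} [NeZero k] (M : Matrix (Fin p) (Fin p) ℝ) :
    Matrix.trace (M ^ k) = ∑ y : Fin k → Fin p, ∏ i : Fin k, M (y i) (y (i+1)) := by
  obtain ⟨m, rfl⟩ : ∃ m, k = m + 1 :=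
    ⟨k - 1, (Nat.succ_pred_eq_of_pos (Nat.pos_of_ne_zero (NeZero.ne k))).symm⟩
  rw [Matrix.trace]
  have h1 : ∀ (i : Fin p) (x : Fin m → Fin p) (t : Fin (m+1)),
      (Fin.snoc x i : Fin (m+1) → Fin p) t = (Fin.cons i x : Fin (m+1) → Fin p) (t + 1) := by
    intro i x t
    induction t using Fin.lastCases with
    | last => simp [Fin.snoc_last, Fin.last_add_one]
    | cast s => rw [Fin.coeSucc_eq_succ, Fin.snoc_castSucc, Fin.cons_succ]
  calc ∑ i, (M ^ (m+1)).diag i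
      = ∑ i : Fin p, ∑ x : Fin m → Fin p,
          ∏ t : Fin (m+1), M ((Fin.cons i x : Fin (m+1) → Fin p) t)
            ((Fin.cons i x : Fin (m+1) → Fin p) (t+1)) := by
        simp_rw [Matrix.diag, KV.pow_succ_apply M m, h1]
    _ = ∑ ix : Fin p × (Fin m → Fin p),
          ∏ t : Fin (m+1), M ((Fin.cons ix.1 ix.2 : Fin (m+1) → Fin p) t)
            ((Fin.cons ix.1 ix.2 : Fin (m+1) → Fin p) (t+1)) := by
        rw [Fintype.sum_prod_type]
    _ = ∑ y : Fin (m+1) → Fin p, ∏ i : Fin (m+1), M (y i) (y (i+1)) := by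
        exact Fintype.sum_equiv (Fin.consEquiv (fun _ => Fin p)) _ _ (fun ax => rfl)


variable {Ω : Type*} [MeasureSpace Ω] [IsProbabilityMeasure (volume : Measure Ω)] in
lemma KV.integral_prod_pair (p n : ℕ)
    (Z : Fin p → Fin n → Ω → ℝ)
    (hmeas : ∀ i t, Measurable (Z i t))
    (hindep : iIndepFun
      (fun (it : Fin p × Fin n) ω => Z it.1 it.2 ω) volume)
    (hmean : ∀ i t, ∫ ω, Z i t ω = 0)
    (hvar : ∀ i t, ∫ ω, (Z i t ω) ^ 2 = 1)
    (k : ℕ) (σ : Fin k → Fin n) (hσ : Function.Injective σ)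
    (g h : Fin k → Fin p) :
    Integrable (fun ω => ∏ i : Fin k, Z (g i) (σ i) ω * Z (h i) (σ i) ω) ∧
    ∫ ω, ∏ i : Fin k, Z (g i) (σ i) ω * Z (h i) (σ i) ω
      = ∏ i : Fin k, (if g i = h i then (1:ℝ) else 0) := by
  classical
  -- integrability of squares
  have hZsq : ∀ a t, Integrable (fun ω => (Z a t ω) ^ 2) := by
    intro a t
    by_contra hc
    have := hvar a t
    rw [integral_undef hc] at this
    exact one_ne_zero this.symm
  -- integrability of entries
  have hZint : ∀ a t, Integrable (Z a t) := by
    intro a t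
    have h2 : MeasureTheory.MemLp (Z a t) 2 volume :=
      (memLp_two_iff_integrable_sq (hmeas a t).aestronglyMeasurable).2 (hZsq a t)
    exact h2.integrable one_le_two
  set W : Fin k → Ω → ℝ := fun i ω => Z (g i) (σ i) ω * Z (h i) (σ i) ω with hW
  have hWmeas : ∀ i, Measurable (W i) := fun i =>
    ((hmeas (g i) (σ i)).mul (hmeas (h i) (σ i)))
  have hWint : ∀ i, Integrable (W i) := by
    intro i
    by_cases hgh : g i = h i
    · have : W i = fun ω => (Z (g i) (σ i) ω) ^ 2 := by
        funext ω; simp [hW, hgh, sq]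
      rw [this]; exact hZsq _ _
    · have hne : ((g i, σ i) : Fin p × Fin n) ≠ (h i, σ i) := by
        simp [Prod.ext_iff, hgh]
      exact (hindep.indepFun hne).integrable_mul (hZint _ _) (hZint _ _)
  have hWval : ∀ i, ∫ ω, W i ω = if g i = h i then (1:ℝ) else 0 := by
    intro i
    by_cases hgh : g i = h i
    · rw [if_pos hgh]
      have : ∀ ω, W i ω = (Z (g i) (σ i) ω) ^ 2 := by
        intro ω; simp [hW, hgh, sq]
      simp_rw [this]; exact hvar _ _
    · rw [if_neg hgh]
      have hne : ((g i, σ i) : Fin p × Fin n) ≠ (h i, σ i) := by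
        simp [Prod.ext_iff, hgh]
      have hmul := (hindep.indepFun hne).integral_fun_mul_eq_mul_integral
        (hZint (g i) (σ i)).aestronglyMeasurable (hZint (h i) (σ i)).aestronglyMeasurable
      calc ∫ ω, W i ω = (∫ ω, Z (g i) (σ i) ω) * ∫ ω, Z (h i) (σ i) ω := hmul
        _ = 0 := by rw [hmean, zero_mul]
  -- independence of W j from products over disjoint finsets
  have hWindepProd : ∀ (s : Finset (Fin k)) (j : Fin k), j ∉ s →
      IndepFun (fun ω => ∏ i ∈ s, W i ω) (W j) volume := by
    intro s j hj
    set S : Finset (Fin p × Fin n) :=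
      Finset.univ.filter (fun e => e.2 ∈ s.image σ) with hS
    set T : Finset (Fin p × Fin n) :=
      Finset.univ.filter (fun e => e.2 = σ j) with hT
    have hdisj : Disjoint S T := by
      rw [Finset.disjoint_left]
      intro e heS heT
      rw [hS, Finset.mem_filter] at heS
      rw [hT, Finset.mem_filter] at heT
      obtain ⟨i, his, hiσ⟩ := Finset.mem_image.1 heS.2
      exact hj ((hσ (hiσ.trans heT.2)) ▸ his)
    have base := hindep.indepFun_finset S T hdisj (fun it => hmeas it.1 it.2)
    have hmemS : ∀ i ∈ s, ∀ r : Fin p, ((r, σ i) : Fin p × Fin n) ∈ S := by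
      intro i hi r
      rw [hS, Finset.mem_filter]
      exact ⟨Finset.mem_univ _, Finset.mem_image_of_mem σ hi⟩
    have hmemT : ∀ r : Fin p, ((r, σ j) : Fin p × Fin n) ∈ T := by
      intro r; rw [hT, Finset.mem_filter]; exact ⟨Finset.mem_univ _, rfl⟩
    set φ : ((e : S) → ℝ) → ℝ := fun v =>
      ∏ i ∈ s.attach, v ⟨(g i.1, σ i.1), hmemS i.1 i.2 _⟩ * v ⟨(h i.1, σ i.1), hmemS i.1 i.2 _⟩
      with hφ
    set ψ : ((e : T) → ℝ) → ℝ := fun v =>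
      v ⟨(g j, σ j), hmemT _⟩ * v ⟨(h j, σ j), hmemT _⟩ with hψ
    have hφm : Measurable φ := by
      apply Finset.measurable_prod
      intro i _
      exact (measurable_pi_apply _).mul (measurable_pi_apply _)
    have hψm : Measurable ψ := (measurable_pi_apply _).mul (measurable_pi_apply _)
    have := base.comp hφm hψm
    have heq1 : (φ ∘ fun a (e : S) => Z e.1.1 e.1.2 a) = fun ω => ∏ i ∈ s, W i ω := by
      funext ω
      simp only [Function.comp_apply, hφ]
      rw [← Finset.prod_attach s (fun i => W i ω)]
    have heq2 : (ψ ∘ fun a (e : T) => Z e.1.1 e.1.2 a) = W j := by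
      funext ω; rfl
    rwa [heq1, heq2] at this
  -- induction over finsets
  have main : ∀ s : Finset (Fin k),
      Integrable (fun ω => ∏ i ∈ s, W i ω) ∧
      ∫ ω, ∏ i ∈ s, W i ω = ∏ i ∈ s, ∫ ω, W i ω := by
    intro s
    induction s using Finset.induction_on with
    | empty => simp
    | @insert j s hj ih =>
        have hind := hWindepProd s j hj
        constructor
        · have := hind.symm.integrable_mul (hWint j) ih.1
          simpa [Finset.prod_insert hj, Pi.mul_def] using this
        · have := hind.integral_fun_mul_eq_mul_integral ih.1.aestronglyMeasurable (hWint j).aestronglyMeasurable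
          simp only [Finset.prod_insert hj]
          calc ∫ ω, W j ω * ∏ i ∈ s, W i ω
              = ∫ ω, (∏ i ∈ s, W i ω) * W j ω := by
                congr 1; funext ω; ring
            _ = (∫ ω, ∏ i ∈ s, W i ω) * ∫ ω, W j ω := this
            _ = (∫ ω, W j ω) * ∏ i ∈ s, ∫ ω, W i ω := by rw [ih.2]; ring
  refine ⟨(main Finset.univ).1, ?_⟩
  rw [(main Finset.univ).2]
  exact Finset.prod_congr rfl (fun i _ => hWval i)


theorem cyclic_product_unbiased {Ω : Type*} [MeasureSpace Ω]
    [IsProbabilityMeasure (volume : Measure Ω)]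
    (p n : ℕ) (A : Matrix (Fin p) (Fin p) ℝ)
    (Z : Fin p → Fin n → Ω → ℝ)
    (hmeas : ∀ i t, Measurable (Z i t))
    (hindep : iIndepFun
      (fun (it : Fin p × Fin n) ω => Z it.1 it.2 ω) volume)
    (hmean : ∀ i t, ∫ ω, Z i t ω = 0)
    (hvar : ∀ i t, ∫ ω, (Z i t ω) ^ 2 = 1)
    (X : Ω → Matrix (Fin p) (Fin n) ℝ)
    (hX : ∀ ω, X ω = A * Matrix.of (fun i t => Z i t ω))
    (k : ℕ) [NeZero k] (σ : Fin k → Fin n) (hσ : Function.Injective σ)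
    (hint : Integrable (fun ω => ∏ i : Fin k, ((X ω)ᵀ * X ω) (σ i) (σ (i + 1)))) :
    ∫ ω, ∏ i : Fin k, ((X ω)ᵀ * X ω) (σ i) (σ (i + 1))
      = Matrix.trace ((A * Aᵀ) ^ k) := by
  classical
  -- abbreviations per summand
  set C : (Fin k → Fin p × Fin p × Fin p) → ℝ :=
    fun v => ∏ i : Fin k, A (v i).1 (v i).2.1 * A (v i).1 (v i).2.2 with hC
  set P : (Fin k → Fin p × Fin p × Fin p) → Ω → ℝ :=
    fun v ω => ∏ i : Fin k, Z (v i).2.1 (σ i) ω * Z ((v (i - 1)).2.2) (σ i) ω with hP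
  -- step 1 : pointwise expansion of the integrand
  have hfactor : ∀ (ω : Ω) (i : Fin k), ((X ω)ᵀ * X ω) (σ i) (σ (i+1))
      = ∑ v : Fin p × Fin p × Fin p,
          (A v.1 v.2.1 * A v.1 v.2.2) * (Z v.2.1 (σ i) ω * Z v.2.2 (σ (i+1)) ω) := by
    intro ω i
    rw [hX, Matrix.mul_apply, Fintype.sum_prod_type]
    refine Finset.sum_congr rfl (fun a _ => ?_)
    rw [Matrix.transpose_apply, Matrix.mul_apply, Matrix.mul_apply, Finset.sum_mul_sum,
        Fintype.sum_prod_type]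
    refine Finset.sum_congr rfl (fun b _ => ?_)
    refine Finset.sum_congr rfl (fun c _ => ?_)
    simp only [Matrix.of_apply]
    ring
  have hexpand : ∀ ω : Ω, (∏ i : Fin k, ((X ω)ᵀ * X ω) (σ i) (σ (i+1)))
      = ∑ v : Fin k → Fin p × Fin p × Fin p, C v * P v ω := by
    intro ω
    calc (∏ i : Fin k, ((X ω)ᵀ * X ω) (σ i) (σ (i+1)))
        = ∏ i : Fin k, ∑ v : Fin p × Fin p × Fin p,
            (A v.1 v.2.1 * A v.1 v.2.2) * (Z v.2.1 (σ i) ω * Z v.2.2 (σ (i+1)) ω) := by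
          exact Finset.prod_congr rfl (fun i _ => hfactor ω i)
      _ = ∑ v ∈ Fintype.piFinset (fun _ : Fin k => (Finset.univ : Finset (Fin p × Fin p × Fin p))),
            ∏ i : Fin k, (A (v i).1 (v i).2.1 * A (v i).1 (v i).2.2)
              * (Z (v i).2.1 (σ i) ω * Z (v i).2.2 (σ (i+1)) ω) := by
          rw [Finset.prod_univ_sum]
      _ = ∑ v : Fin k → Fin p × Fin p × Fin p,
            ∏ i : Fin k, (A (v i).1 (v i).2.1 * A (v i).1 (v i).2.2)
              * (Z (v i).2.1 (σ i) ω * Z (v i).2.2 (σ (i+1)) ω) := by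
          rw [Fintype.piFinset_univ]
      _ = ∑ v : Fin k → Fin p × Fin p × Fin p, C v * P v ω := by
          refine Finset.sum_congr rfl (fun v _ => ?_)
          rw [Finset.prod_mul_distrib, hC, hP]
          congr 1
          show _ = ∏ i : Fin k, Z (v i).2.1 (σ i) ω * Z ((v (i - 1)).2.2) (σ i) ω
          rw [Finset.prod_mul_distrib, Finset.prod_mul_distrib]
          congr 1
          rw [← KV.prod_shift (fun i => Z ((v (i - 1)).2.2) (σ i) ω)]
          exact Finset.prod_congr rfl (fun i _ => by rw [add_sub_cancel_right])
  -- step 2 : integrate term by term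
  have hpair := fun v : Fin k → Fin p × Fin p × Fin p =>
    KV.integral_prod_pair p n Z hmeas hindep hmean hvar k σ hσ
      (fun i => (v i).2.1) (fun i => (v (i - 1)).2.2)
  have hPint : ∀ v, Integrable (fun ω => C v * P v ω) := by
    intro v
    exact ((hpair v).1.const_mul (C v))
  have hInt : ∫ ω, ∏ i : Fin k, ((X ω)ᵀ * X ω) (σ i) (σ (i+1))
      = ∑ v : Fin k → Fin p × Fin p × Fin p,
          C v * ∏ i : Fin k, (if (v i).2.1 = (v (i - 1)).2.2 then (1:ℝ) else 0) := by
    rw [integral_congr_ae (Filter.Eventually.of_forall hexpand),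
        integral_finset_sum _ (fun v _ => hPint v)]
    refine Finset.sum_congr rfl (fun v _ => ?_)
    rw [MeasureTheory.integral_const_mul, (hpair v).2]
  rw [hInt]
  -- step 3 : compute the combinatorial sum
  -- delta product
  have hdelta : ∀ v : Fin k → Fin p × Fin p × Fin p,
      (∏ i : Fin k, (if (v i).2.1 = (v (i - 1)).2.2 then (1:ℝ) else 0))
      = if (∀ i : Fin k, (v i).2.1 = (v (i - 1)).2.2) then (1:ℝ) else 0 := by
    intro v
    rw [Fintype.prod_boole]
    congr
  -- trace side
  have htr : Matrix.trace ((A * Aᵀ) ^ k)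
      = ∑ y : Fin k → Fin p, ∑ w : Fin k → Fin p,
          ∏ i : Fin k, A (y i) (w i) * A (y (i+1)) (w i) := by
    rw [KV.trace_pow]
    refine Finset.sum_congr rfl (fun y _ => ?_)
    have : ∀ i : Fin k, (A * Aᵀ) (y i) (y (i+1))
        = ∑ e : Fin p, A (y i) e * A (y (i+1)) e := by
      intro i
      rw [Matrix.mul_apply]
      exact Finset.sum_congr rfl (fun e _ => by rw [Matrix.transpose_apply])
    rw [Finset.prod_congr rfl (fun i _ => this i), Finset.prod_univ_sum, Fintype.piFinset_univ]
  rw [htr]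
  -- reindex the v-sum as a triple sum
  let e : ((Fin k → Fin p) × (Fin k → Fin p) × (Fin k → Fin p))
      ≃ (Fin k → Fin p × Fin p × Fin p) :=
    { toFun := fun abc i => (abc.1 i, abc.2.1 i, abc.2.2 i)
      invFun := fun v => (fun i => (v i).1, fun i => (v i).2.1, fun i => (v i).2.2)
      left_inv := fun abc => rfl
      right_inv := fun v => rfl }
  rw [← Equiv.sum_comp e (fun v => C v * ∏ i : Fin k,
      (if (v i).2.1 = (v (i - 1)).2.2 then (1:ℝ) else 0)), Fintype.sum_prod_type]
  simp_rw [Fintype.sum_prod_type]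
  -- now the sum is over a b c
  calc ∑ a : Fin k → Fin p, ∑ b : Fin k → Fin p, ∑ c : Fin k → Fin p,
        C (e (a, b, c)) * ∏ i : Fin k,
          (if (e (a, b, c) i).2.1 = (e (a, b, c) (i - 1)).2.2 then (1:ℝ) else 0)
      = ∑ a : Fin k → Fin p, ∑ c : Fin k → Fin p, ∑ b : Fin k → Fin p,
          (if b = (fun i => c (i - 1)) then
            (∏ i : Fin k, A (a i) (b i) * A (a i) (c i)) else 0) := by
        refine Finset.sum_congr rfl (fun a _ => ?_)
        rw [Finset.sum_comm]
        refine Finset.sum_congr rfl (fun c _ => ?_)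
        refine Finset.sum_congr rfl (fun b _ => ?_)
        have : (∏ i : Fin k, (if (e (a, b, c) i).2.1 = (e (a, b, c) (i - 1)).2.2
            then (1:ℝ) else 0)) = if b = (fun i => c (i - 1)) then (1:ℝ) else 0 := by
          rw [hdelta]
          congr 1
          simp only [eq_iff_iff]
          constructor
          · intro hall; funext i; exact hall i
          · intro hb i; exact congrFun hb i
        rw [this, hC]
        simp only [mul_ite, mul_one, mul_zero]
        rfl
    _ = ∑ a : Fin k → Fin p, ∑ c : Fin k → Fin p,
          ∏ i : Fin k, A (a i) (c (i - 1)) * A (a i) (c i) := by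
        refine Finset.sum_congr rfl (fun a _ => ?_)
        refine Finset.sum_congr rfl (fun c _ => ?_)
        rw [Finset.sum_ite_eq' Finset.univ (fun i => c (i - 1))
          (fun b => ∏ i : Fin k, A (a i) (b i) * A (a i) (c i))]
        simp
    _ = ∑ y : Fin k → Fin p, ∑ w : Fin k → Fin p,
          ∏ i : Fin k, A (y i) (w i) * A (y (i+1)) (w i) := by
        refine Finset.sum_congr rfl (fun a _ => ?_)
        refine Finset.sum_congr rfl (fun c _ => ?_)
        rw [Finset.prod_mul_distrib, Finset.prod_mul_distrib]
        rw [← KV.prod_shift (fun i => A (a i) (c (i - 1)))]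
        have : (∏ i : Fin k, A (a (i + 1)) (c (i + 1 - 1)))
            = ∏ i : Fin k, A (a (i + 1)) (c i) :=
          Finset.prod_congr rfl (fun i _ => by rw [add_sub_cancel_right])
        rw [this, mul_comm]
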